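/- Let R be a finite group, S ⊆ R, and let K, H be subgroups with 1 < K, K normal in H, H < R, and K·(S \ H) = S \ H = (S \ H)·K. Then the automorphism group of the Cayley digraph Cay(R,S) is strictly larger than the right regular representation of R; i.e., Cay(R,S) is not a digraphical regular representation. -/
import Mathlib


open scoped Pointwise

lemma keyL {R : Type*} [Group R] (S : Set R) (K H : Subgroup R) (hKH : K ≤ H)
    (h1 : (K : Set R) * (S \ (H : Set R)) = S \ (H : Set R))
    {κ a : R} (hκ : κ ∈ K) (ha : a ∉ H) : a ∈ S ↔ κ * a ∈ S := by
  constructor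
  · intro h
    have : κ * a ∈ (K : Set R) * (S \ (H : Set R)) :=
      Set.mul_mem_mul hκ ⟨h, ha⟩
    rw [h1] at this
    exact this.1
  · intro h
    have hκa : κ * a ∉ H := fun hm => ha (by simpa using H.mul_mem (H.inv_mem (hKH hκ)) hm)
    have : κ⁻¹ * (κ * a) ∈ (K : Set R) * (S \ (H : Set R)) :=
      Set.mul_mem_mul (K.inv_mem hκ) ⟨h, hκa⟩
    rw [h1] at this
    simpa [mul_assoc] using this.1

lemma keyR {R : Type*} [Group R] (S : Set R) (K H : Subgroup R) (hKH : K ≤ H)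
    (h2 : (S \ (H : Set R)) * (K : Set R) = S \ (H : Set R))
    {κ a : R} (hκ : κ ∈ K) (ha : a ∉ H) : a ∈ S ↔ a * κ ∈ S := by
  constructor
  · intro h
    have : a * κ ∈ (S \ (H : Set R)) * (K : Set R) :=
      Set.mul_mem_mul ⟨h, ha⟩ hκ
    rw [h2] at this
    exact this.1
  · intro h
    have hκa : a * κ ∉ H := fun hm => ha (by simpa using H.mul_mem hm (H.inv_mem (hKH hκ)))
    have : (a * κ) * κ⁻¹ ∈ (S \ (H : Set R)) * (K : Set R) :=
      Set.mul_mem_mul ⟨h, hκa⟩ (K.inv_mem hκ)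
    rw [h2] at this
    simpa [mul_assoc] using this.1

/-- A Cayley digraph that is a nontrivial generalised wreath product is not
a DRR: its automorphism group is strictly larger than the right regular representation. -/
theorem stmt1 {R : Type*} [Group R] [Finite R] (S : Set R) (K H : Subgroup R)
    (hK : ⊥ < K) (hKH : K ≤ H)
    (hnorm : ∀ h ∈ H, ∀ k ∈ K, h * k * h⁻¹ ∈ K)
    (hH : H < ⊤)
    (h1 : (K : Set R) * (S \ (H : Set R)) = S \ (H : Set R))
    (h2 : (S \ (H : Set R)) * (K : Set R) = S \ (H : Set R)) :
    ∃ f : Equiv.Perm R,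
      (∀ x y : R, x * y⁻¹ ∈ S ↔ f x * (f y)⁻¹ ∈ S) ∧
      ¬ ∃ r : R, ∀ v : R, f v = v * r := by
  classical
  obtain ⟨k, hkK, hk1⟩ := SetLike.exists_of_lt hK
  rw [Subgroup.mem_bot] at hk1
  obtain ⟨y0, -, hy0⟩ := SetLike.exists_of_lt hH
  have hmemk : ∀ v : R, v * k ∈ H ↔ v ∈ H := fun v => mul_mem_cancel_right (hKH hkK)
  refine ⟨{ toFun := fun v => if v ∈ H then v * k else v,
            invFun := fun v => if v ∈ H then v * k⁻¹ else v,
            left_inv := ?_, right_inv := ?_ }, ?_, ?_⟩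
  · intro v
    by_cases hv : v ∈ H
    · simp [hv, (hmemk v).mpr hv, mul_assoc]
    · simp [hv]
  · intro v
    by_cases hv : v ∈ H
    · have : v * k⁻¹ ∈ H := H.mul_mem hv (H.inv_mem (hKH hkK))
      simp [hv, this, mul_assoc]
    · simp [hv]
  · intro x y
    simp only [Equiv.coe_fn_mk]
    by_cases hx : x ∈ H <;> by_cases hy : y ∈ H
    · simp only [hx, hy, if_pos]
      rw [mul_inv_rev, show x * k * (k⁻¹ * y⁻¹) = x * y⁻¹ by group]
    · simp only [hx, hy, if_pos, if_neg, not_false_iff]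
      have ha : x * y⁻¹ ∉ H := fun hm => hy (by
        have : x⁻¹ * (x * y⁻¹) ∈ H := H.mul_mem (H.inv_mem hx) hm
        simpa using H.inv_mem this)
      have hκ : x * k * x⁻¹ ∈ K := hnorm x hx k hkK
      have := keyL S K H hKH h1 hκ ha
      rw [show x * k * x⁻¹ * (x * y⁻¹) = x * k * y⁻¹ by group] at this
      exact this
    · simp only [hx, hy, if_pos, if_neg, not_false_iff]
      have ha : x * y⁻¹ ∉ H := fun hm => hx (by
        have : (x * y⁻¹) * y ∈ H := H.mul_mem hm hy
        simpa using this)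
      have hκ : y * k⁻¹ * y⁻¹ ∈ K := hnorm y hy k⁻¹ (K.inv_mem hkK)
      have := keyR S K H hKH h2 hκ ha
      rw [show (x * y⁻¹) * (y * k⁻¹ * y⁻¹) = x * (y * k)⁻¹ by group] at this
      exact this
    · simp [hx, hy]
  · rintro ⟨r, hr⟩
    have h1' := hr 1
    simp only [Equiv.coe_fn_mk, if_pos H.one_mem, one_mul] at h1'
    have h2' := hr y0
    simp only [Equiv.coe_fn_mk, if_neg hy0] at h2'
    rw [← h1'] at h2'
    exact hk1 (by simpa using h2'.symm)
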